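/- Let X be a finite set, m a positive integer, and for each i ∈ [m] let A_i^0, A_i^1 partition X with A_i^1 nonempty and |A_i^1| ≤ |X|/2. For b ∈ {0,1}^m, let |ψ^b⟩ = ⊗_{i=1}^m |ψ_i^{b_i}⟩, where |ψ_i^c⟩ is the uniform-amplitude unit vector over A_i^c in ℂ^X. Let β > 8m/|X| and suppose A_1^1 × ⋯ × A_m^1 ⊆ Υ_{β/2}(m,X), where Υ_γ(m,X) is the set of tuples (x_1,…,x_m) ∈ X^m in which every element of X appears at most γ times. Let Π be the orthogonal projection of (ℂ^X)^{⊗m} onto the span of basis vectors |x_1⟩⊗⋯⊗|x_m⟩ with (x_1,…,x_m) ∉ Υ_β(m,X). Then for every unit vector |φ⟩ in the span of {|ψ^b⟩ : b ∈ {0,1}^m}, one has ‖Π|φ⟩‖² < |X|·exp(−2m/(9|X|)). -/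

import Mathlib

open scoped BigOperators Classical

/-- `Aset A1 true = A1` (the solution set `A¹`) and `Aset A1 false = A1ᶜ` (the set `A⁰`). -/
def Aset {X : Type*} [Fintype X] [DecidableEq X] (A1 : Finset X) : Bool → Finset X
  | true => A1
  | false => A1ᶜ

/-- The state `|ψ^b⟩ = ⊗ᵢ |ψᵢ^{bᵢ}⟩`, where `|ψᵢ^c⟩` is the uniform-amplitude unit vector
supported on `Aᵢ^c`.  A tensor of uniform superpositions, written in coordinates. -/
noncomputable def psiState {X : Type*} [Fintype X] [DecidableEq X] {m : ℕ}
    (A1 : Fin m → Finset X) (b : Fin m → Bool) : EuclideanSpace ℂ (Fin m → X) :=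
  WithLp.toLp 2 fun x => ∏ i, if x i ∈ Aset (A1 i) (b i)
    then (((Real.sqrt ((Aset (A1 i) (b i)).card))⁻¹ : ℝ) : ℂ) else 0

/-- `Υ_γ(m, X)`: tuples in `X^m` in which every element of `X` appears at most `γ` times. -/
def Upsilon (m : ℕ) (X : Type*) [Fintype X] [DecidableEq X] (γ : ℝ) : Set (Fin m → X) :=
  {x | ∀ a : X, ((Finset.univ.filter fun i => x i = a).card : ℝ) ≤ γ}

/-- The orthogonal projection onto the span of the basis vectors indexed by tuples
outside `Υ_β(m, X)`, written in coordinates. -/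
noncomputable def badProj {X : Type*} [Fintype X] [DecidableEq X] {m : ℕ} (β : ℝ)
    (φ : EuclideanSpace ℂ (Fin m → X)) : EuclideanSpace ℂ (Fin m → X) :=
  WithLp.toLp 2 fun x => if x ∈ Upsilon m X β then 0 else φ x

open Finset

section Aux
variable {X : Type*} [Fintype X] [DecidableEq X] {m : ℕ}


lemma aset_nonempty (A1 : Finset X) (h1 : A1.Nonempty) (hh : 2 * A1.card ≤ Fintype.card X)
    (c : Bool) : (Aset A1 c).Nonempty := by
  cases c
  · rw [Aset, ← Finset.card_pos, Finset.card_compl]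
    have h1' : 1 ≤ A1.card := h1.card_pos
    omega
  · exact h1

/-- per-element Chernoff bound -/
lemma chernoff_a (hm : 0 < m)
    (A1 : Fin m → Finset X) (hne : ∀ i, (A1 i).Nonempty)
    (hhalf : ∀ i, 2 * (A1 i).card ≤ Fintype.card X)
    (β : ℝ) (hβ : 8 * m / (Fintype.card X : ℝ) < β)
    (hsub : ∀ x : Fin m → X, (∀ i, x i ∈ A1 i) → x ∈ Upsilon m X (β / 2))
    (b : Fin m → Bool) (a : X) :
    (((Fintype.piFinset fun i => Aset (A1 i) (b i)).filter
        fun x => β < ((Finset.univ.filter fun i => x i = a).card : ℝ)).card : ℝ)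
      < Real.exp (-(2 * m) / (9 * Fintype.card X)) *
        ((Fintype.piFinset fun i => Aset (A1 i) (b i)).card : ℝ) := by
  set q : ℕ := Fintype.card X with hq
  have hq0 : 0 < q := Fintype.card_pos_iff.mpr ⟨a⟩
  have hq0' : (0:ℝ) < q := by exact_mod_cast hq0
  set G : Finset (Fin m → X) := Fintype.piFinset fun i => Aset (A1 i) (b i) with hG
  have hGcard : ∀ i, 0 < ((Aset (A1 i) (b i)).card) := fun i =>
    (aset_nonempty (A1 i) (hne i) (hhalf i) (b i)).card_pos
  have hGpos : (0:ℝ) < G.card := by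
    rw [hG, Fintype.card_piFinset]
    exact_mod_cast Finset.prod_pos fun i _ => hGcard i
  set S : (Fin m → X) → ℕ := fun x => (Finset.univ.filter fun i => b i = false ∧ x i = a).card
    with hS
  -- step 1 : on the grid, bad count forces large S
  have step1 : ∀ x ∈ G, β < ((Finset.univ.filter fun i => x i = a).card : ℝ) →
      β / 2 < (S x : ℝ) := by
    intro x hx hbad
    have hxg : ∀ i, x i ∈ Aset (A1 i) (b i) := Fintype.mem_piFinset.mp hx
    set y : Fin m → X := fun i => if x i ∈ A1 i then x i else (hne i).choose with hy
    have hyA : ∀ i, y i ∈ A1 i := by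
      intro i; rw [hy]; dsimp only; split
      · assumption
      · exact (hne i).choose_spec
    have hyU := hsub y hyA a
    have hsubset : (Finset.univ.filter fun i => b i = true ∧ x i = a) ⊆
        (Finset.univ.filter fun i => y i = a) := by
      intro i hi
      rw [Finset.mem_filter] at hi ⊢
      obtain ⟨-, hb, hxa⟩ := hi
      have hmem := hxg i
      rw [hb] at hmem
      simp only [Aset] at hmem
      refine ⟨Finset.mem_univ _, ?_⟩
      rw [hy]; dsimp only; rw [if_pos hmem, hxa]
    have h1 : ((Finset.univ.filter fun i => b i = true ∧ x i = a).card : ℝ) ≤ β / 2 :=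
      le_trans (by exact_mod_cast Finset.card_le_card hsubset) hyU
    have hsplit := Finset.card_filter_add_card_filter_not
      (s := Finset.univ.filter fun i => x i = a) (p := fun i => b i = false)
    rw [Finset.filter_filter, Finset.filter_filter] at hsplit
    have e1 : (Finset.univ.filter fun i => (x i = a) ∧ b i = false)
        = (Finset.univ.filter fun i => b i = false ∧ x i = a) :=
      Finset.filter_congr fun i _ => by simp [and_comm]
    have e2 : (Finset.univ.filter fun i => (x i = a) ∧ ¬ b i = false)
        = (Finset.univ.filter fun i => b i = true ∧ x i = a) :=
      Finset.filter_congr fun i _ => by simp [Bool.not_eq_false, and_comm]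
    rw [e1, e2] at hsplit
    have hsplit' : ((S x : ℝ) + ((Finset.univ.filter fun i => b i = true ∧ x i = a).card : ℝ))
        = ((Finset.univ.filter fun i => x i = a).card : ℝ) := by
      rw [hS]; exact_mod_cast hsplit
    linarith
  -- step 2 : MGF bound
  have step2 : ∑ x ∈ G, (2:ℝ) ^ (S x) ≤ (G.card : ℝ) * Real.exp (2 * m / q) := by
    have hpt : ∀ x : Fin m → X, (2:ℝ) ^ (S x) =
        ∏ i, (if b i = false ∧ x i = a then (2:ℝ) else 1) := by
      intro x
      rw [hS, ← Finset.prod_const, Finset.prod_filter]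
    calc ∑ x ∈ G, (2:ℝ) ^ (S x)
        = ∏ i, ∑ y ∈ Aset (A1 i) (b i), (if b i = false ∧ y = a then (2:ℝ) else 1) := by
          rw [Finset.prod_univ_sum]
          exact Finset.sum_congr rfl fun x _ => hpt x
      _ ≤ ∏ i, ((Aset (A1 i) (b i)).card : ℝ) * Real.exp (2 / q) := by
          apply Finset.prod_le_prod
          · intro i _
            apply Finset.sum_nonneg
            intro y _
            split <;> norm_num
          · intro i _
            have hexp1 : (1:ℝ) ≤ Real.exp (2 / q) := by
              rw [Real.one_le_exp_iff]; positivity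
            have hc0 : (0:ℝ) ≤ ((Aset (A1 i) (b i)).card : ℝ) := by positivity
            cases hb : b i with
            | false =>
              simp only [hb, eq_self_iff_true, true_and]
              have hcpos : (0:ℝ) < ((Aset (A1 i) false).card : ℝ) := by
                have h := hGcard i; rw [hb] at h; exact_mod_cast h
              have hcard : (q:ℝ) ≤ 2 * ((Aset (A1 i) false).card : ℝ) := by
                have hh := hhalf i
                have h2 : (Aset (A1 i) false).card = q - (A1 i).card := Finset.card_compl _
                have h3 : (A1 i).card ≤ q := Finset.card_le_card (Finset.subset_univ _)
                have : ((Aset (A1 i) false).card : ℝ) = (q : ℝ) - (A1 i).card := by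
                  rw [h2]; push_cast [Nat.cast_sub h3]; ring
                have hh' : (2:ℝ) * (A1 i).card ≤ q := by exact_mod_cast hh
                linarith
              have hsum : ∑ y ∈ Aset (A1 i) false, (if y = a then (2:ℝ) else 1)
                  ≤ ((Aset (A1 i) false).card : ℝ) + 1 := by
                have hrw : ∀ y : X, (if y = a then (2:ℝ) else 1)
                    = 1 + (if y = a then (1:ℝ) else 0) := by
                  intro y; split <;> norm_num
                simp only [hrw, Finset.sum_add_distrib, Finset.sum_const, nsmul_eq_mul, mul_one]
                rw [Finset.sum_ite_eq' (Aset (A1 i) false) a (fun _ => (1:ℝ))]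
                split <;> norm_num
              refine hsum.trans ?_
              have h5 := Real.add_one_le_exp ((2:ℝ) / q)
              have h6 : (1:ℝ) ≤ ((Aset (A1 i) false).card : ℝ) * (2 / q) := by
                rw [show ((Aset (A1 i) false).card : ℝ) * (2 / q)
                  = (((Aset (A1 i) false).card : ℝ) * 2) / q by ring, le_div_iff₀ hq0']
                linarith
              nlinarith [mul_le_mul_of_nonneg_left h5 hcpos.le]
            | true =>
              have hsum : ∑ y ∈ Aset (A1 i) true, (if true = false ∧ y = a then (2:ℝ) else 1)
                  = ((Aset (A1 i) true).card : ℝ) := by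
                simp
              rw [hsum]
              nlinarith [hexp1, (by positivity : (0:ℝ) ≤ ((Aset (A1 i) true).card : ℝ))]
      _ = (G.card : ℝ) * Real.exp (2 * m / q) := by
          rw [Finset.prod_mul_distrib, Finset.prod_const, Finset.card_univ, Fintype.card_fin,
            ← Real.exp_nat_mul, hG, Fintype.card_piFinset]
          push_cast
          rw [show (m:ℝ) * (2 / q) = 2 * m / q by ring]
  -- step 3 : Markov
  set Bd : Finset (Fin m → X) := G.filter
      (fun x => β < ((Finset.univ.filter fun i => x i = a).card : ℝ)) with hBd
  have step3 : (Bd.card : ℝ) * (2:ℝ) ^ (β / 2 : ℝ) ≤ ∑ x ∈ G, (2:ℝ) ^ (S x) := by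
    calc (Bd.card : ℝ) * (2:ℝ) ^ (β / 2 : ℝ)
        = ∑ _x ∈ Bd, (2:ℝ) ^ (β / 2 : ℝ) := by rw [Finset.sum_const, nsmul_eq_mul]
      _ ≤ ∑ x ∈ Bd, (2:ℝ) ^ (S x) := by
          apply Finset.sum_le_sum
          intro x hx
          rw [hBd, Finset.mem_filter] at hx
          have h1 : β / 2 ≤ (S x : ℝ) := (step1 x hx.1 hx.2).le
          calc (2:ℝ) ^ (β / 2 : ℝ) ≤ (2:ℝ) ^ ((S x : ℕ) : ℝ) := by
                rw [Real.rpow_le_rpow_left_iff (by norm_num)]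
                exact h1
            _ = (2:ℝ) ^ (S x) := Real.rpow_natCast 2 (S x)
      _ ≤ ∑ x ∈ G, (2:ℝ) ^ (S x) := by
          apply Finset.sum_le_sum_of_subset_of_nonneg (Finset.filter_subset _ _)
          intro x _ _
          positivity
  -- combine
  have hpow : (2:ℝ) ^ (β / 2 : ℝ) = Real.exp (Real.log 2 * (β / 2)) :=
    Real.rpow_def_of_pos (by norm_num) _
  have hfinal : (Bd.card : ℝ) ≤ (G.card : ℝ) * Real.exp (2 * m / q - Real.log 2 * (β / 2)) := by
    have hp : (0:ℝ) < (2:ℝ) ^ (β / 2 : ℝ) := Real.rpow_pos_of_pos (by norm_num) _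
    calc (Bd.card : ℝ) ≤ (∑ x ∈ G, (2:ℝ) ^ (S x)) / (2:ℝ) ^ (β / 2 : ℝ) := by
            rw [le_div_iff₀ hp]; exact step3
        _ ≤ ((G.card : ℝ) * Real.exp (2 * m / q)) / (2:ℝ) ^ (β / 2 : ℝ) := by
            gcongr
        _ = (G.card : ℝ) * Real.exp (2 * m / q - Real.log 2 * (β / 2)) := by
            rw [hpow, Real.exp_sub, mul_div_assoc]
  refine hfinal.trans_lt ?_
  have harg : 2 * (m:ℝ) / q - Real.log 2 * (β / 2) < -(2 * m) / (9 * q) := by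
    have hlog0 : (0:ℝ) < Real.log 2 := by linarith [Real.log_two_gt_d9]
    have hlog4 : (20 / 9 : ℝ) ≤ Real.log 2 * 4 := by nlinarith [Real.log_two_gt_d9]
    have ht : (0:ℝ) ≤ (m:ℝ) / q := by positivity
    have hβ' : 8 * ((m:ℝ) / q) < β := by rw [← mul_div_assoc]; exact hβ
    have e2 : -(2 * (m:ℝ)) / (9 * q) = -(2 / 9 * ((m:ℝ) / q)) := by
      field_simp
    rw [mul_div_assoc, e2]
    have h1 : 4 * ((m:ℝ) / q) < β / 2 := by linarith
    have h2 := mul_le_mul_of_nonneg_right hlog4 ht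
    have h3 := mul_lt_mul_of_pos_left h1 hlog0
    nlinarith [h2, h3]
  calc (G.card : ℝ) * Real.exp (2 * m / q - Real.log 2 * (β / 2))
      < (G.card : ℝ) * Real.exp (-(2 * m) / (9 * q)) := by
        apply mul_lt_mul_of_pos_left _ hGpos
        exact Real.exp_lt_exp.mpr harg
    _ = Real.exp (-(2 * m) / (9 * q)) * (G.card : ℝ) := mul_comm _ _

/-- union bound over elements of `X` -/
lemma chernoff_union (hm : 0 < m)
    (A1 : Fin m → Finset X) (hne : ∀ i, (A1 i).Nonempty)
    (hhalf : ∀ i, 2 * (A1 i).card ≤ Fintype.card X)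
    (β : ℝ) (hβ : 8 * m / (Fintype.card X : ℝ) < β)
    (hsub : ∀ x : Fin m → X, (∀ i, x i ∈ A1 i) → x ∈ Upsilon m X (β / 2))
    (b : Fin m → Bool) :
    (((Fintype.piFinset fun i => Aset (A1 i) (b i)).filter
        fun x => x ∉ Upsilon m X β).card : ℝ)
      < (Fintype.card X : ℝ) * Real.exp (-(2 * m) / (9 * Fintype.card X)) *
        ((Fintype.piFinset fun i => Aset (A1 i) (b i)).card : ℝ) := by
  classical
  set G : Finset (Fin m → X) := Fintype.piFinset fun i => Aset (A1 i) (b i) with hG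
  have hsub2 : G.filter (fun x => x ∉ Upsilon m X β) ⊆
      Finset.univ.biUnion (fun a : X => G.filter
        fun x => β < ((Finset.univ.filter fun i => x i = a).card : ℝ)) := by
    intro x hx
    rw [Finset.mem_filter] at hx
    obtain ⟨hxG, hxB⟩ := hx
    rw [Upsilon, Set.mem_setOf_eq] at hxB
    push_neg at hxB
    obtain ⟨a, ha⟩ := hxB
    exact Finset.mem_biUnion.mpr ⟨a, Finset.mem_univ _, Finset.mem_filter.mpr ⟨hxG, ha⟩⟩
  have hXne : Nonempty X := ⟨(hne ⟨0, hm⟩).choose⟩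
  calc ((G.filter fun x => x ∉ Upsilon m X β).card : ℝ)
      ≤ ((Finset.univ.biUnion (fun a : X => G.filter
          fun x => β < ((Finset.univ.filter fun i => x i = a).card : ℝ))).card : ℝ) := by
        exact_mod_cast Finset.card_le_card hsub2
    _ ≤ ∑ a : X, ((G.filter
          fun x => β < ((Finset.univ.filter fun i => x i = a).card : ℝ)).card : ℝ) := by
        exact_mod_cast Finset.card_biUnion_le
    _ < ∑ _a : X, Real.exp (-(2 * m) / (9 * Fintype.card X)) * (G.card : ℝ) := by
        apply Finset.sum_lt_sum_of_nonempty Finset.univ_nonempty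
        intro a _
        exact chernoff_a hm A1 hne hhalf β hβ hsub b a
    _ = (Fintype.card X : ℝ) * Real.exp (-(2 * m) / (9 * Fintype.card X)) * (G.card : ℝ) := by
        rw [Finset.sum_const, Finset.card_univ, nsmul_eq_mul]
        ring


lemma psi_sq (A1 : Fin m → Finset X) (b : Fin m → Bool) (x : Fin m → X) :
    ‖psiState A1 b x‖ ^ 2 =
      if (∀ i, x i ∈ Aset (A1 i) (b i)) then ∏ i, ((Aset (A1 i) (b i)).card : ℝ)⁻¹ else 0 := by
  have h0 : psiState A1 b x = ∏ i, (if x i ∈ Aset (A1 i) (b i)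
      then (((Real.sqrt ((Aset (A1 i) (b i)).card))⁻¹ : ℝ) : ℂ) else 0) := rfl
  rw [h0, norm_prod, ← Finset.prod_pow]
  by_cases hall : ∀ i, x i ∈ Aset (A1 i) (b i)
  · rw [if_pos hall]
    apply Finset.prod_congr rfl
    intro i _
    rw [if_pos (hall i), Complex.norm_real, Real.norm_eq_abs, ← Real.sqrt_inv,
      abs_of_nonneg (Real.sqrt_nonneg _), Real.sq_sqrt (by positivity)]
  · rw [if_neg hall]
    push_neg at hall
    obtain ⟨i, hi⟩ := hall
    apply Finset.prod_eq_zero (Finset.mem_univ i)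
    rw [if_neg hi]
    simp

lemma psi_force (A1 : Fin m → Finset X) (x : Fin m → X) (b : Fin m → Bool)
    (hb : ∀ i, x i ∈ Aset (A1 i) (b i)) : b = fun i => decide (x i ∈ A1 i) := by
  funext i
  have hbi := hb i
  rcases Bool.eq_false_or_eq_true (b i) with h | h <;> rw [h] at hbi ⊢
  · simp only [Aset] at hbi
    simp [hbi]
  · simp only [Aset, Finset.mem_compl] at hbi
    simp [hbi]

lemma psi_zero (A1 : Fin m → Finset X) (x : Fin m → X) (b : Fin m → Bool)
    (hb : b ≠ fun i => decide (x i ∈ A1 i)) : psiState A1 b x = 0 := by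
  have h2 : ‖psiState A1 b x‖ ^ 2 = 0 := by
    rw [psi_sq, if_neg]
    intro hall
    exact hb (psi_force A1 x b hall)
  have := pow_eq_zero_iff (n := 2) (by norm_num) |>.mp h2
  exact norm_eq_zero.mp this

lemma phi_apply_sq (A1 : Fin m → Finset X)
    (c : (Fin m → Bool) → ℂ) (φ : EuclideanSpace ℂ (Fin m → X))
    (hc : ∑ b, c b • psiState A1 b = φ) (x : Fin m → X) :
    ‖φ x‖ ^ 2 = ∑ b, ‖c b‖ ^ 2 * ‖psiState A1 b x‖ ^ 2 := by
  classical
  have happ : φ x = ∑ b, c b * psiState A1 b x := by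
    rw [← hc]
    simp [WithLp.ofLp_sum, Finset.sum_apply]
  set b0 : Fin m → Bool := fun i => decide (x i ∈ A1 i) with hb0
  have h1 : φ x = c b0 * psiState A1 b0 x := by
    rw [happ]
    apply Finset.sum_eq_single b0
    · intro b _ hb
      rw [psi_zero A1 x b hb, mul_zero]
    · intro h; exact absurd (Finset.mem_univ _) h
  have h2 : ∑ b, ‖c b‖ ^ 2 * ‖psiState A1 b x‖ ^ 2 = ‖c b0‖ ^ 2 * ‖psiState A1 b0 x‖ ^ 2 := by
    apply Finset.sum_eq_single b0
    · intro b _ hb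
      rw [psi_zero A1 x b hb]
      simp
    · intro h; exact absurd (Finset.mem_univ _) h
  rw [h1, h2, norm_mul, mul_pow]

lemma norm_sq_eq_sum (φ : EuclideanSpace ℂ (Fin m → X)) :
    ‖φ‖ ^ 2 = ∑ x, ‖φ x‖ ^ 2 := by
  rw [EuclideanSpace.norm_eq, Real.sq_sqrt]
  positivity

end Aux

theorem stmt7 {X : Type*} [Fintype X] [DecidableEq X] {m : ℕ} (hm : 0 < m)
    (A1 : Fin m → Finset X) (hne : ∀ i, (A1 i).Nonempty)
    (hhalf : ∀ i, 2 * (A1 i).card ≤ Fintype.card X)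
    (β : ℝ) (hβ : 8 * m / (Fintype.card X : ℝ) < β)
    (hsub : ∀ x : Fin m → X, (∀ i, x i ∈ A1 i) → x ∈ Upsilon m X (β / 2))
    (φ : EuclideanSpace ℂ (Fin m → X))
    (hφ : φ ∈ Submodule.span ℂ (Set.range (psiState A1)))
    (hφ1 : ‖φ‖ = 1) :
    ‖badProj β φ‖ ^ 2 <
      (Fintype.card X : ℝ) * Real.exp (-(2 * m) / (9 * Fintype.card X)) := by
  classical
  obtain ⟨c, hc⟩ := (Submodule.mem_span_range_iff_exists_fun ℂ).mp hφ
  set M : ℝ := (Fintype.card X : ℝ) * Real.exp (-(2 * m) / (9 * Fintype.card X)) with hM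
  set G : (Fin m → Bool) → Finset (Fin m → X) :=
    fun b => Fintype.piFinset fun i => Aset (A1 i) (b i) with hGdef
  set w : (Fin m → Bool) → ℝ := fun b => ∏ i, ((Aset (A1 i) (b i)).card : ℝ)⁻¹ with hwdef
  have hGcard : ∀ (b : Fin m → Bool) (i : Fin m), 0 < ((Aset (A1 i) (b i)).card) := fun b i =>
    (aset_nonempty (A1 i) (hne i) (hhalf i) (b i)).card_pos
  have hwpos : ∀ b, 0 < w b := by
    intro b
    rw [hwdef]
    apply Finset.prod_pos
    intro i _
    have := hGcard b i
    positivity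
  -- squared amplitudes of ψ b
  have hpsi : ∀ b x, ‖psiState A1 b x‖ ^ 2 = if x ∈ G b then w b else 0 := by
    intro b x
    rw [psi_sq, hGdef]
    by_cases h : ∀ i, x i ∈ Aset (A1 i) (b i)
    · rw [if_pos h, if_pos (Fintype.mem_piFinset.mpr h), hwdef]
    · rw [if_neg h, if_neg (fun hx => h (Fintype.mem_piFinset.mp hx))]
  -- B b and N b
  have hN : ∀ b, ∑ x, ‖psiState A1 b x‖ ^ 2 = ((G b).card : ℝ) * w b := by
    intro b
    simp only [hpsi]
    rw [Finset.sum_ite_mem, Finset.univ_inter, Finset.sum_const, nsmul_eq_mul]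
  have hB : ∀ b, (∑ x, if x ∈ Upsilon m X β then 0 else ‖psiState A1 b x‖ ^ 2)
      = (((G b).filter fun x => x ∉ Upsilon m X β).card : ℝ) * w b := by
    intro b
    have hpt : ∀ x, (if x ∈ Upsilon m X β then 0 else ‖psiState A1 b x‖ ^ 2)
        = (if x ∈ G b then (if x ∉ Upsilon m X β then w b else 0) else 0) := by
      intro x
      rw [hpsi]
      by_cases h1 : x ∈ Upsilon m X β <;> by_cases h2 : x ∈ G b <;> simp [h1, h2]
    simp only [hpt]
    rw [Finset.sum_ite_mem, Finset.univ_inter, ← Finset.sum_filter, Finset.sum_const,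
      nsmul_eq_mul]
  -- the key per-b inequality
  have hkey : ∀ b, (∑ x, if x ∈ Upsilon m X β then 0 else ‖psiState A1 b x‖ ^ 2)
      < M * ∑ x, ‖psiState A1 b x‖ ^ 2 := by
    intro b
    rw [hB, hN]
    have h := chernoff_union hm A1 hne hhalf β hβ hsub b
    calc (((G b).filter fun x => x ∉ Upsilon m X β).card : ℝ) * w b
        < (M * ((G b).card : ℝ)) * w b := by
          apply mul_lt_mul_of_pos_right _ (hwpos b)
          rw [hM]
          exact h
      _ = M * (((G b).card : ℝ) * w b) := by ring
  -- express the two global quantities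
  have hsq : ∀ x, ‖φ x‖ ^ 2 = ∑ b, ‖c b‖ ^ 2 * ‖psiState A1 b x‖ ^ 2 :=
    phi_apply_sq A1 c φ hc
  have hone : ∑ b, ‖c b‖ ^ 2 * ∑ x, ‖psiState A1 b x‖ ^ 2 = 1 := by
    have h1 : ∑ x, ‖φ x‖ ^ 2 = 1 := by rw [← norm_sq_eq_sum, hφ1, one_pow]
    calc ∑ b, ‖c b‖ ^ 2 * ∑ x, ‖psiState A1 b x‖ ^ 2
        = ∑ b, ∑ x, ‖c b‖ ^ 2 * ‖psiState A1 b x‖ ^ 2 := by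
          simp_rw [Finset.mul_sum]
      _ = ∑ x, ∑ b, ‖c b‖ ^ 2 * ‖psiState A1 b x‖ ^ 2 := Finset.sum_comm
      _ = ∑ x, ‖φ x‖ ^ 2 := by simp_rw [← hsq]
      _ = 1 := h1
  have hbadnorm : ‖badProj β φ‖ ^ 2 = ∑ b, ‖c b‖ ^ 2 *
      (∑ x, if x ∈ Upsilon m X β then 0 else ‖psiState A1 b x‖ ^ 2) := by
    rw [norm_sq_eq_sum]
    calc ∑ x, ‖badProj β φ x‖ ^ 2
        = ∑ x, (if x ∈ Upsilon m X β then 0 else ‖φ x‖ ^ 2) := by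
          apply Finset.sum_congr rfl
          intro x _
          have hb : badProj β φ x = if x ∈ Upsilon m X β then 0 else φ x := rfl
          rw [hb, apply_ite (fun z : ℂ => ‖z‖ ^ 2)]
          simp
      _ = ∑ x, ∑ b, (if x ∈ Upsilon m X β then 0 else ‖c b‖ ^ 2 * ‖psiState A1 b x‖ ^ 2) := by
          apply Finset.sum_congr rfl
          intro x _
          by_cases h : x ∈ Upsilon m X β
          · simp [h]
          · simp only [h, if_false]
            exact hsq x
      _ = ∑ b, ∑ x, (if x ∈ Upsilon m X β then 0 else ‖c b‖ ^ 2 * ‖psiState A1 b x‖ ^ 2) :=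
          Finset.sum_comm
      _ = ∑ b, ‖c b‖ ^ 2 * (∑ x, if x ∈ Upsilon m X β then 0 else ‖psiState A1 b x‖ ^ 2) := by
          apply Finset.sum_congr rfl
          intro b _
          rw [Finset.mul_sum]
          apply Finset.sum_congr rfl
          intro x _
          by_cases h : x ∈ Upsilon m X β <;> simp [h]
  have hpos : ∃ b : Fin m → Bool, 0 < ‖c b‖ ^ 2 * ∑ x, ‖psiState A1 b x‖ ^ 2 := by
    by_contra hcon
    push_neg at hcon
    have hle : ∑ b, ‖c b‖ ^ 2 * ∑ x, ‖psiState A1 b x‖ ^ 2 ≤ 0 :=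
      Finset.sum_nonpos fun b _ => hcon b
    rw [hone] at hle
    linarith
  obtain ⟨b0, hb0⟩ := hpos
  have hcb0 : 0 < ‖c b0‖ ^ 2 := by
    by_contra hcon
    push_neg at hcon
    have h0 : ‖c b0‖ ^ 2 = 0 := le_antisymm hcon (sq_nonneg _)
    rw [h0, zero_mul] at hb0
    exact lt_irrefl _ hb0
  rw [hbadnorm]
  calc ∑ b, ‖c b‖ ^ 2 * (∑ x, if x ∈ Upsilon m X β then 0 else ‖psiState A1 b x‖ ^ 2)
      < ∑ b, ‖c b‖ ^ 2 * (M * ∑ x, ‖psiState A1 b x‖ ^ 2) := by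
        apply Finset.sum_lt_sum
        · intro b _
          exact mul_le_mul_of_nonneg_left (hkey b).le (sq_nonneg _)
        · exact ⟨b0, Finset.mem_univ _, mul_lt_mul_of_pos_left (hkey b0) hcb0⟩
    _ = M * ∑ b, ‖c b‖ ^ 2 * ∑ x, ‖psiState A1 b x‖ ^ 2 := by
        rw [Finset.mul_sum]
        apply Finset.sum_congr rfl
        intro b _
        ring
    _ = M := by rw [hone, mul_one]
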